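/- arXiv:1108.1033 — 2 statements merged into one kernel-verified Lean document; each statement's English description precedes it below -/
import Mathlib

section
/- Least favorable configuration: for X ∼ N_d(c, Σ) with c ∈ K, the probability P(X ∈ A) is minimized over c ∈ K at c = 0, where A = {x : inf_{y∈K} ‖x−y‖_{Σ^{-1}} < d₀}. Formally, for every c ∈ K, P(X ∈ A | mean c) ≥ P(X ∈ A | mean 0). -/
open Matrix MeasureTheory

/-- Least favorable configuration: for a Gaussian vector `X ∼ N_d(c, Σ)` (realized as
`c + Z` where `Z` has the centered law `μ₀`), with `c ∈ K` and `A` the open `d₀`-neighborhood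
of the closed convex cone `K` in the `‖·‖_{Σ⁻¹}` metric (given by a positive definite
matrix `S = Σ⁻¹`), we have `P(X ∈ A | mean c) ≥ P(X ∈ A | mean 0)`. -/
theorem least_favorable_configuration
    (d : ℕ) (S : Matrix (Fin d) (Fin d) ℝ) (hS : S.PosDef)
    (μ₀ : Measure (Fin d → ℝ)) [IsProbabilityMeasure μ₀]
    (K : Set (Fin d → ℝ)) (hKclosed : IsClosed K) (hKconv : Convex ℝ K)
    (hKcone : ∀ x ∈ K, ∀ r : ℝ, 0 ≤ r → r • x ∈ K)
    (c : Fin d → ℝ) (hc : c ∈ K) (d₀ : ℝ) (hd₀ : 0 < d₀) :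
    let nS : (Fin d → ℝ) → ℝ := fun v => Real.sqrt (v ⬝ᵥ S.mulVec v)
    let A : Set (Fin d → ℝ) := {x | ∃ y ∈ K, nS (x - y) < d₀}
    μ₀ A ≤ (μ₀.map (fun z => c + z)) A := by
  intro nS A
  -- continuity of nS
  have hnS : Continuous nS := by
    apply Real.continuous_sqrt.comp
    continuity
  -- A is open
  have hAopen : IsOpen A := by
    have : A = ⋃ y ∈ K, {x | nS (x - y) < d₀} := by
      ext x; simp [A, Set.mem_iUnion]
    rw [this]
    exact isOpen_biUnion fun y _ =>
      isOpen_lt (hnS.comp (continuous_id.sub continuous_const)) continuous_const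
  have hAmeas : MeasurableSet A := hAopen.measurableSet
  have hf : Measurable (fun z : Fin d → ℝ => c + z) :=
    measurable_const.add measurable_id
  rw [Measure.map_apply hf hAmeas]
  apply measure_mono
  intro z hz
  obtain ⟨y, hy, hlt⟩ := hz
  refine ⟨c + y, ?_, ?_⟩
  · -- c + y ∈ K : K convex cone contains sums
    have hmid : (1/2 : ℝ) • c + (1/2 : ℝ) • y ∈ K :=
      hKconv hc hy (by norm_num) (by norm_num) (by norm_num)
    have := hKcone _ hmid 2 (by norm_num)
    simpa [smul_smul, smul_add] using this
  · show nS (c + z - (c + y)) < d₀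
    have : c + z - (c + y) = z - y := by ring_nf
    rw [this]; exact hlt
end

section
/- Confidence-bound inequality: for any nonnegative finite measure μ on T and vectors ĉ, c ∈ ℝ^(n+1), with μ[ψ] = ∫_T ψ(t) dμ(t), one has ∫_T (ĉ − c)ᵀψ(t) dμ(t) ≤ ‖μ[ψ]‖_Σ · ‖Π_Σ(Σ^{-1}(ĉ − c) | K*)‖_Σ, where Π_Σ(·|K*) is the projection onto the moment cone K* in the ‖·‖_Σ metric. -/
open Matrix MeasureTheory

/-- Confidence-bound inequality: for a nonnegative finite measure `μ` supported on a
compact set `T`, with `μ[ψ] = ∫ ψ(t) dμ(t)` (componentwise) and `p` the projection of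
`z = Σ⁻¹(ĉ − c)` onto the moment cone `K*` in the `‖·‖_Σ` metric,
`∫ (ĉ − c)ᵀψ(t) dμ(t) ≤ ‖μ[ψ]‖_Σ · ‖p‖_Σ`. -/
theorem confidence_bound_inequality
    (n : ℕ) (T : Set ℝ) (hT : IsCompact T)
    (Sig : Matrix (Fin (n + 1)) (Fin (n + 1)) ℝ) (hSig : Sig.PosDef)
    (μ : Measure ℝ) [IsFiniteMeasure μ] (hμT : μ Tᶜ = 0)
    (chat c : Fin (n + 1) → ℝ) :
    let ψ : ℝ → (Fin (n + 1) → ℝ) := fun t i => t ^ (i : ℕ)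
    let Kstar : Set (Fin (n + 1) → ℝ) :=
      closure {x | ∃ (k : ℕ) (ρ : Fin k → ℝ) (τ : Fin k → ℝ),
        (∀ i, 0 ≤ ρ i) ∧ (∀ i, τ i ∈ T) ∧ x = ∑ i : Fin k, ρ i • ψ (τ i)}
    let nSig : (Fin (n + 1) → ℝ) → ℝ := fun v => Real.sqrt (v ⬝ᵥ Sig.mulVec v)
    let μψ : Fin (n + 1) → ℝ := fun i => ∫ t, t ^ (i : ℕ) ∂μ
    let z : Fin (n + 1) → ℝ := Sig⁻¹.mulVec (chat - c)
    ∀ p : Fin (n + 1) → ℝ, p ∈ Kstar → (∀ q ∈ Kstar, nSig (z - p) ≤ nSig (z - q)) →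
      (∫ t, (chat - c) ⬝ᵥ ψ t ∂μ) ≤ nSig μψ * nSig p := by
  intro ψ Kstar nSig μψ z p hp hproj
  set C : Set (Fin (n + 1) → ℝ) := {x | ∃ (k : ℕ) (ρ : Fin k → ℝ) (τ : Fin k → ℝ),
        (∀ i, 0 ≤ ρ i) ∧ (∀ i, τ i ∈ T) ∧ x = ∑ i : Fin k, ρ i • ψ (τ i)} with hC
  have hKC : Kstar = closure C := rfl
  -- bilinear form
  set B : (Fin (n + 1) → ℝ) → (Fin (n + 1) → ℝ) → ℝ :=
    fun x y => x ⬝ᵥ Sig.mulVec y with hBdef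
  have hBsymm : ∀ x y, B x y = B y x := by
    intro x y
    simp only [hBdef]
    rw [Matrix.dotProduct_mulVec, ← Matrix.mulVec_transpose]
    have hst : Sigᵀ = Sig := by
      have := hSig.1.eq
      simpa [Matrix.conjTranspose_eq_transpose_of_trivial] using this
    rw [hst, dotProduct_comm]
  have hBpos : ∀ x, 0 ≤ B x x := by
    intro x
    have := hSig.posSemidef.dotProduct_mulVec_nonneg x
    simpa [hBdef] using this
  have hnSig : ∀ v, nSig v = Real.sqrt (B v v) := fun _ => rfl
  have hBaddl : ∀ x y w, B (x + y) w = B x w + B y w := by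
    intro x y w; simp [hBdef, add_dotProduct]
  have hBaddr : ∀ x y w, B w (x + y) = B w x + B w y := by
    intro x y w; simp [hBdef, Matrix.mulVec_add, dotProduct_add]
  have hBsmull : ∀ (a : ℝ) x w, B (a • x) w = a * B x w := by
    intro a x w; simp [hBdef, smul_dotProduct]
  have hBsmulr : ∀ (a : ℝ) x w, B w (a • x) = a * B w x := by
    intro a x w; simp [hBdef, Matrix.mulVec_smul, dotProduct_smul]
  have hBsubl : ∀ x y w, B (x - y) w = B x w - B y w := by
    intro x y w; simp [hBdef, sub_dotProduct]
  have hBsubr : ∀ x y w, B w (x - y) = B w x - B w y := by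
    intro x y w; simp [hBdef, Matrix.mulVec_sub, dotProduct_sub]
  have hexp : ∀ a b (θ : ℝ), B (a + θ • b) (a + θ • b)
      = B a a + 2 * θ * B a b + θ ^ 2 * B b b := by
    intro a b θ
    rw [hBaddl, hBaddr, hBaddr, hBsmull, hBsmull, hBsmulr, hBsmulr, hBsymm b a]
    ring
  -- Cauchy-Schwarz
  have hCS : ∀ x y, B x y ≤ nSig x * nSig y := by
    intro x y
    have hq : ∀ θ : ℝ, 0 ≤ B y y * (θ * θ) + (2 * B x y) * θ + B x x := by
      intro θ
      have := hBpos (x + θ • y)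
      rw [hexp x y θ] at this
      nlinarith [this]
    have hdis := discrim_le_zero hq
    rw [discrim] at hdis
    have hsq : (B x y) ^ 2 ≤ B x x * B y y := by nlinarith [hdis]
    calc B x y ≤ |B x y| := le_abs_self _
      _ = Real.sqrt ((B x y) ^ 2) := (Real.sqrt_sq_eq_abs _).symm
      _ ≤ Real.sqrt (B x x * B y y) := Real.sqrt_le_sqrt hsq
      _ = Real.sqrt (B x x) * Real.sqrt (B y y) := Real.sqrt_mul (hBpos x) _
      _ = nSig x * nSig y := by rw [hnSig, hnSig]
  -- cone facts
  have hC0 : (0 : Fin (n + 1) → ℝ) ∈ C := by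
    refine ⟨0, Fin.elim0, Fin.elim0, ?_, ?_, ?_⟩ <;> simp
  have hCψ : ∀ t ∈ T, ψ t ∈ C := by
    intro t ht
    exact ⟨1, fun _ => 1, fun _ => t, fun _ => zero_le_one, fun _ => ht, by simp⟩
  have hCadd : ∀ x ∈ C, ∀ y ∈ C, x + y ∈ C := by
    rintro x ⟨k₁, ρ₁, τ₁, hρ₁, hτ₁, rfl⟩ y ⟨k₂, ρ₂, τ₂, hρ₂, hτ₂, rfl⟩
    refine ⟨k₁ + k₂, Fin.append ρ₁ ρ₂, Fin.append τ₁ τ₂, ?_, ?_, ?_⟩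
    · refine fun i => i.addCases (fun j => ?_) (fun j => ?_)
      · simpa [Fin.append_left] using hρ₁ j
      · simpa [Fin.append_right] using hρ₂ j
    · refine fun i => i.addCases (fun j => ?_) (fun j => ?_)
      · simpa [Fin.append_left] using hτ₁ j
      · simpa [Fin.append_right] using hτ₂ j
    · rw [Fin.sum_univ_add]
      congr 1 <;> [skip; skip] <;>
        refine Finset.sum_congr rfl fun j _ => by
          simp [Fin.append_left, Fin.append_right]
  have hCsmul : ∀ (a : ℝ), 0 ≤ a → ∀ x ∈ C, a • x ∈ C := by
    rintro a ha x ⟨k, ρ, τ, hρ, hτ, rfl⟩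
    refine ⟨k, fun i => a * ρ i, τ, fun i => mul_nonneg ha (hρ i), hτ, ?_⟩
    rw [Finset.smul_sum]
    exact Finset.sum_congr rfl fun j _ => by rw [smul_smul]
  have hCconv : Convex ℝ C := by
    intro x hx y hy a b ha hb hab
    exact hCadd _ (hCsmul a ha x hx) _ (hCsmul b hb y hy)
  have hKconv : Convex ℝ Kstar := hCconv.closure
  -- a.e. membership in T
  have haeT : ∀ᵐ t ∂μ, t ∈ T := by
    rw [MeasureTheory.ae_iff]
    exact hμT
  -- integrability of powers
  have hIntPow : ∀ i : ℕ, Integrable (fun t : ℝ => t ^ i) μ := by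
    intro i
    obtain ⟨R, hR⟩ := hT.isBounded.subset_closedBall 0
    refine Integrable.mono' (integrable_const ((max R 0) ^ i))
      ((measurable_id.pow_const i).aestronglyMeasurable) ?_
    filter_upwards [haeT] with t ht
    have h1 : |t| ≤ max R 0 := by
      have := hR ht
      simp only [Metric.mem_closedBall, Real.dist_eq, sub_zero] at this
      exact le_trans this (le_max_left _ _)
    calc ‖t ^ i‖ = |t| ^ i := by rw [Real.norm_eq_abs, abs_pow]
      _ ≤ (max R 0) ^ i := pow_le_pow_left₀ (abs_nonneg t) h1 i
  -- swap integral and dot product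
  have hswap : ∀ v : Fin (n + 1) → ℝ, (∫ t, v ⬝ᵥ ψ t ∂μ) = v ⬝ᵥ μψ := by
    intro v
    have : ∀ t : ℝ, v ⬝ᵥ ψ t = ∑ i : Fin (n + 1), v i * t ^ (i : ℕ) := by
      intro t; simp [dotProduct, ψ]
    simp_rw [this]
    rw [integral_finset_sum]
    · simp_rw [integral_const_mul]
      simp [dotProduct, μψ]
    · exact fun i _ => (hIntPow (i : ℕ)).const_mul (v i)
  -- μψ ∈ Kstar
  have hμψK : μψ ∈ Kstar := by
    by_contra hnot
    have hKcl : IsClosed Kstar := isClosed_closure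
    obtain ⟨f, u, hfs, hfu⟩ := geometric_hahn_banach_closed_point hKconv hKcl hnot
    have hu0 : 0 < u := by
      have := hfs 0 (subset_closure hC0)
      simpa using this
    have hfT : ∀ t ∈ T, f (ψ t) ≤ 0 := by
      intro t ht
      by_contra h
      push_neg at h
      have ha : (0:ℝ) ≤ (u + 1) / f (ψ t) := div_nonneg (by linarith) h.le
      have hmem : ((u + 1) / f (ψ t)) • ψ t ∈ Kstar :=
        subset_closure (hCsmul _ ha _ (hCψ t ht))
      have h2 := hfs _ hmem
      rw [f.map_smul, smul_eq_mul, div_mul_cancel₀ _ (ne_of_gt h)] at h2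
      linarith
    have hfx : ∀ x : Fin (n + 1) → ℝ,
        f x = ∑ i : Fin (n + 1), x i * f (fun j => if i = j then (1:ℝ) else 0) := by
      intro x
      conv_lhs => rw [pi_eq_sum_univ x]
      rw [map_sum]
      refine Finset.sum_congr rfl fun i _ => ?_
      rw [f.map_smul, smul_eq_mul]
    have hint : (∫ t, f (ψ t) ∂μ)
        = ∑ i : Fin (n + 1), (∫ t, t ^ (i:ℕ) ∂μ) * f (fun j => if i = j then (1:ℝ) else 0) := by
      have heq : (fun t : ℝ => f (ψ t))
          = fun t => ∑ i : Fin (n + 1), t ^ (i:ℕ) * f (fun j => if i = j then (1:ℝ) else 0) :=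
        funext fun t => hfx (ψ t)
      rw [heq, integral_finset_sum]
      · exact Finset.sum_congr rfl fun i _ => integral_mul_const _ _
      · exact fun i _ => (hIntPow (i : ℕ)).mul_const _
    have hfμψ : f μψ = ∫ t, f (ψ t) ∂μ := by
      rw [hint, hfx μψ]
    have hle : (∫ t, f (ψ t) ∂μ) ≤ 0 := by
      refine integral_nonpos_of_ae ?_
      filter_upwards [haeT] with t ht
      exact hfT t ht
    rw [hfμψ] at hfu
    linarith
  -- variational inequality for the projection
  have hvar : ∀ q ∈ Kstar, B (z - p) (q - p) ≤ 0 := by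
    intro q hq
    by_contra hpos
    push_neg at hpos
    set a := B (z - p) (q - p) with hadef
    set d := B (q - p) (q - p) with hddef
    have hd : 0 ≤ d := hBpos _
    set θ : ℝ := min 1 (a / (d + 1)) with hθdef
    have hθ0 : 0 < θ := lt_min one_pos (div_pos hpos (by linarith))
    have hθ1 : θ ≤ 1 := min_le_left _ _
    have hr : p + θ • (q - p) ∈ Kstar := by
      have hmem := hKconv hp hq (by linarith : (0:ℝ) ≤ 1 - θ) hθ0.le (by ring)
      have : (1 - θ) • p + θ • q = p + θ • (q - p) := by
        rw [smul_sub, sub_smul, one_smul]; abel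
      rwa [this] at hmem
    have hkey := hproj _ hr
    have hzr : z - (p + θ • (q - p)) = (z - p) + (-θ) • (q - p) := by
      rw [neg_smul]; abel
    have hBle : B (z - p) (z - p) ≤ B (z - (p + θ • (q - p))) (z - (p + θ • (q - p))) := by
      rw [hnSig, hnSig] at hkey
      nlinarith [Real.sq_sqrt (hBpos (z - p)),
        Real.sq_sqrt (hBpos (z - (p + θ • (q - p)))),
        Real.sqrt_nonneg (B (z - p) (z - p)),
        Real.sqrt_nonneg (B (z - (p + θ • (q - p))) (z - (p + θ • (q - p))))]
    rw [hzr, hexp] at hBle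
    have h2 : 2 * a ≤ θ * d := by nlinarith [hBle, hθ0]
    have h3 : θ * d ≤ a := by
      calc θ * d ≤ (a / (d + 1)) * d :=
            mul_le_mul_of_nonneg_right (min_le_right _ _) hd
        _ ≤ a := by
            rw [div_mul_eq_mul_div, div_le_iff₀ (by linarith : (0:ℝ) < d + 1)]
            nlinarith [hpos, hd]
    linarith
  -- orthogonality
  have h2p : (2:ℝ) • p ∈ Kstar := by
    have hcont : Continuous fun x : Fin (n + 1) → ℝ => (2:ℝ) • x := continuous_const_smul _
    have hsub : (fun x : Fin (n + 1) → ℝ => (2:ℝ) • x) '' C ⊆ C := by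
      rintro _ ⟨x, hx, rfl⟩
      exact hCsmul 2 (by norm_num) x hx
    exact closure_mono hsub (image_closure_subset_closure_image hcont ⟨p, hp, rfl⟩)
  have hB0r : ∀ w, B w 0 = 0 := by intro w; simp [hBdef]
  have hortho : B (z - p) p = 0 := by
    have hle1 : B (z - p) p ≤ 0 := by
      have := hvar _ h2p
      have h2 : (2:ℝ) • p - p = p := by rw [two_smul]; abel
      rwa [h2] at this
    have hge1 : 0 ≤ B (z - p) p := by
      have := hvar 0 (subset_closure hC0)
      rw [hBsubr, hB0r] at this
      linarith
    linarith
  -- conclusion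
  have hchar : B z μψ ≤ B p μψ := by
    have h := hvar μψ hμψK
    rw [hBsubl, hBsubr, hBsubr] at h
    rw [hBsubl] at hortho
    have hsym := hBsymm p μψ
    linarith [hBsymm z p, hBsymm p p, h]
  have hSz : Sig.mulVec z = chat - c := by
    show Sig *ᵥ (Sig⁻¹ *ᵥ (chat - c)) = chat - c
    rw [Matrix.mulVec_mulVec,
      Matrix.mul_nonsing_inv _ (isUnit_iff_ne_zero.mpr hSig.det_pos.ne'),
      Matrix.one_mulVec]
  have hzμψ : (chat - c) ⬝ᵥ μψ = B z μψ := by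
    rw [hBsymm z μψ]
    show (chat - c) ⬝ᵥ μψ = μψ ⬝ᵥ Sig *ᵥ z
    rw [hSz, dotProduct_comm]
  calc (∫ t, (chat - c) ⬝ᵥ ψ t ∂μ) = (chat - c) ⬝ᵥ μψ := hswap _
    _ = B z μψ := hzμψ
    _ ≤ B p μψ := hchar
    _ ≤ nSig p * nSig μψ := hCS p μψ
    _ = nSig μψ * nSig p := mul_comm _ _
end
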